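/- Let $k$ be a field of characteristic $p > 0$. The center of the Weyl algebra $A = k\langle x, d\rangle/(dx - xd - 1)$ is the polynomial subalgebra $k[x^p, d^p]$. -/

import Mathlib

/-- The defining relation of the Weyl algebra: `d * x = x * d + 1`
(generator `false` is `x`, generator `true` is `d`). -/
inductive WeylRel (k : Type) [Field k] : FreeAlgebra k Bool → FreeAlgebra k Bool → Prop
  | rel : WeylRel k (FreeAlgebra.ι k true * FreeAlgebra.ι k false)
      (FreeAlgebra.ι k false * FreeAlgebra.ι k true + 1)

/-- The generator `x` of the Weyl algebra. -/
noncomputable def Wx (k : Type) [Field k] : RingQuot (WeylRel k) :=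
  RingQuot.mkAlgHom k (WeylRel k) (FreeAlgebra.ι k false)

/-- The generator `d` of the Weyl algebra. -/
noncomputable def Wd (k : Type) [Field k] : RingQuot (WeylRel k) :=
  RingQuot.mkAlgHom k (WeylRel k) (FreeAlgebra.ι k true)

namespace WeylAux
variable (k : Type) [Field k]

/-- model space k[X,Y] as finsupp -/
abbrev V := (ℕ × ℕ) →₀ k

noncomputable def Mx : Module.End k (V k) := Finsupp.lmapDomain k k (fun ij => (ij.1 + 1, ij.2))

noncomputable def Md : Module.End k (V k) :=
  Finsupp.lsum k fun ij => LinearMap.toSpanSingleton k (V k)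
    (Finsupp.single (ij.1, ij.2 + 1) 1 + Finsupp.single (ij.1 - 1, ij.2) (ij.1 : k))

variable {k}

theorem Mx_single (i j : ℕ) (c : k) :
    Mx k (Finsupp.single (i, j) c) = Finsupp.single (i + 1, j) c := by
  simp [Mx, Finsupp.mapDomain_single]

theorem Md_single (i j : ℕ) (c : k) :
    Md k (Finsupp.single (i, j) c)
      = Finsupp.single (i, j + 1) c + Finsupp.single (i - 1, j) ((i : k) * c) := by
  simp [Md, LinearMap.toSpanSingleton_apply, Finsupp.smul_single, smul_add, smul_eq_mul,
    mul_comm c]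

theorem Md_mul_Mx : Md k * Mx k = Mx k * Md k + 1 := by
  apply Finsupp.lhom_ext
  rintro ⟨i, j⟩ c
  show Md k (Mx k _) = Mx k (Md k _) + _
  rw [Mx_single, Md_single, Md_single, map_add, Mx_single, Mx_single]
  simp only [Nat.add_sub_cancel, Nat.cast_add, Nat.cast_one, Module.End.one_apply]
  rcases Nat.eq_zero_or_pos i with h | h
  · subst h; simp
  · rw [Nat.sub_add_cancel h, add_mul, one_mul, Finsupp.single_add]
    abel
-- merged
end WeylAux

namespace WeylAux
variable (k : Type) [Field k]

local notation "A" => RingQuot (WeylRel k)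

noncomputable def phi : RingQuot (WeylRel k) →ₐ[k] Module.End k (V k) :=
  RingQuot.liftAlgHom k ⟨FreeAlgebra.lift k (fun b => if b then Md k else Mx k), by
    rintro x y ⟨⟩
    simp only [map_mul, map_add, map_one, FreeAlgebra.lift_ι_apply, if_true,
      Bool.false_eq_true, if_false]
    exact Md_mul_Mx⟩

theorem phi_Wx : phi k (Wx k) = Mx k := by
  rw [Wx, phi, RingQuot.liftAlgHom_mkAlgHom_apply, FreeAlgebra.lift_ι_apply]
  simp

theorem phi_Wd : phi k (Wd k) = Md k := by
  rw [Wd, phi, RingQuot.liftAlgHom_mkAlgHom_apply, FreeAlgebra.lift_ι_apply]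
  simp

/-- the defining relation in the quotient -/
theorem Wrel : Wd k * Wx k = Wx k * Wd k + 1 := by
  have := RingQuot.mkAlgHom_rel k (WeylRel.rel (k := k))
  simpa only [map_mul, map_add, map_one, Wx, Wd] using this

/-- basis candidates -/
noncomputable def bb (ij : ℕ × ℕ) : RingQuot (WeylRel k) := Wx k ^ ij.1 * Wd k ^ ij.2

theorem comm_d_xpow (n : ℕ) :
    Wd k * Wx k ^ (n + 1) = Wx k ^ (n + 1) * Wd k + (n + 1) • Wx k ^ n := by
  induction n with
  | zero => simpa using Wrel k
  | succ m ih =>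
    have : Wd k * Wx k ^ (m + 2) = (Wd k * Wx k ^ (m + 1)) * Wx k := by
      rw [pow_succ, ← mul_assoc]
    rw [this, ih, add_mul, smul_mul_assoc, ← pow_succ, mul_assoc, Wrel k, mul_add, mul_one,
      ← mul_assoc, ← pow_succ]
    module

theorem comm_dpow_x (n : ℕ) :
    Wd k ^ (n + 1) * Wx k = Wx k * Wd k ^ (n + 1) + (n + 1) • Wd k ^ n := by
  induction n with
  | zero => simpa using Wrel k
  | succ m ih =>
    have : Wd k ^ (m + 2) * Wx k = Wd k * (Wd k ^ (m + 1) * Wx k) := by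
      rw [pow_succ']
      rw [mul_assoc]
    rw [this, ih, mul_add, ← mul_assoc, Wrel k, mul_smul_comm, ← pow_succ', add_mul, one_mul,
      mul_assoc, ← pow_succ']
    module

theorem adjoin_gens : Algebra.adjoin k {Wx k, Wd k} = ⊤ := by
  have h1 : Algebra.adjoin k (Set.range (FreeAlgebra.ι k : Bool → FreeAlgebra k Bool)) = ⊤ :=
    FreeAlgebra.adjoin_range_ι k Bool
  have h2 := congrArg (Subalgebra.map (RingQuot.mkAlgHom k (WeylRel k))) h1
  rw [AlgHom.map_adjoin, Algebra.map_top] at h2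
  have h3 : (RingQuot.mkAlgHom k (WeylRel k)).range = ⊤ := by
    rw [AlgHom.range_eq_top]
    exact RingQuot.mkAlgHom_surjective k (WeylRel k)
  rw [h3] at h2
  have h4 : (RingQuot.mkAlgHom k (WeylRel k)) '' Set.range (FreeAlgebra.ι k)
      = {Wx k, Wd k} := by
    rw [← Set.range_comp]
    ext a
    simp only [Set.mem_range, Function.comp_apply, Set.mem_insert_iff, Set.mem_singleton_iff]
    constructor
    · rintro ⟨b, rfl⟩; cases b
      · left; rfl
      · right; rfl
    · rintro (rfl | rfl)
      · exact ⟨false, rfl⟩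
      · exact ⟨true, rfl⟩
  rw [h4] at h2
  exact h2

end WeylAux

namespace WeylAux
variable (k : Type) [Field k]

noncomputable def ev : RingQuot (WeylRel k) →ₗ[k] V k :=
  (LinearMap.applyₗ (Finsupp.single ((0:ℕ), (0:ℕ)) (1:k))).comp (phi k).toLinearMap

theorem Md_pow (j : ℕ) :
    (Md k ^ j) (Finsupp.single ((0:ℕ), (0:ℕ)) (1:k)) = Finsupp.single (0, j) 1 := by
  induction j with
  | zero => simp
  | succ m ih =>
    rw [pow_succ', Module.End.mul_apply, ih, Md_single]
    simp

theorem Mx_pow (i j : ℕ) :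
    (Mx k ^ i) (Finsupp.single ((0:ℕ), j) (1:k)) = Finsupp.single (i, j) 1 := by
  induction i with
  | zero => simp
  | succ m ih =>
    rw [pow_succ', Module.End.mul_apply, ih, Mx_single]

theorem ev_bb (i j : ℕ) : ev k (bb k (i, j)) = Finsupp.single (i, j) 1 := by
  show (phi k (Wx k ^ i * Wd k ^ j)) (Finsupp.single ((0:ℕ), (0:ℕ)) (1:k)) = _
  rw [map_mul, map_pow, map_pow, phi_Wx, phi_Wd, Module.End.mul_apply, Md_pow, Mx_pow]

theorem linearIndependent_bb : LinearIndependent k (bb k) := by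
  have h : LinearIndependent k (fun ij : ℕ × ℕ => Finsupp.single ij (1:k)) :=
    (Finsupp.basisSingleOne (R := k) (ι := ℕ × ℕ)).linearIndependent
  apply LinearIndependent.of_comp (ev k)
  have : (ev k) ∘ (bb k) = fun ij : ℕ × ℕ => Finsupp.single ij (1:k) := by
    funext ij
    obtain ⟨i, j⟩ := ij
    exact ev_bb k i j
  rw [this]
  exact h

theorem bb_zero : bb k (0, 0) = 1 := by simp [bb]

theorem bb_mul_Wd (i j : ℕ) : bb k (i, j) * Wd k = bb k (i, j + 1) := by
  rw [bb, bb, mul_assoc, ← pow_succ]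

theorem bb_mul_Wx_zero (i : ℕ) : bb k (i, 0) * Wx k = bb k (i + 1, 0) := by
  simp [bb, ← pow_succ]

theorem bb_mul_Wx_succ (i m : ℕ) :
    bb k (i, m + 1) * Wx k = bb k (i + 1, m + 1) + (m + 1) • bb k (i, m) := by
  rw [bb, mul_assoc, comm_dpow_x, mul_add, mul_smul_comm, ← mul_assoc, ← pow_succ, bb, bb]

theorem span_bb_eq_top : Submodule.span k (Set.range (bb k)) = ⊤ := by
  set S := Submodule.span k (Set.range (bb k)) with hS
  have hmem : ∀ ij : ℕ × ℕ, bb k ij ∈ S := fun ij => Submodule.subset_span ⟨ij, rfl⟩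
  have hX : ∀ v ∈ S, v * Wx k ∈ S := by
    intro v hv
    induction hv using Submodule.span_induction with
    | mem x hx =>
      obtain ⟨⟨i, j⟩, rfl⟩ := hx
      cases j with
      | zero => rw [bb_mul_Wx_zero]; exact hmem _
      | succ m =>
        rw [bb_mul_Wx_succ]
        exact S.add_mem (hmem _) (S.toAddSubmonoid.nsmul_mem (hmem _) _)
    | zero => simp
    | add x y _ _ hx hy => rw [add_mul]; exact S.add_mem hx hy
    | smul r x _ hx => rw [smul_mul_assoc]; exact S.smul_mem r hx
  have hD : ∀ v ∈ S, v * Wd k ∈ S := by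
    intro v hv
    induction hv using Submodule.span_induction with
    | mem x hx =>
      obtain ⟨⟨i, j⟩, rfl⟩ := hx
      rw [bb_mul_Wd]; exact hmem _
    | zero => simp
    | add x y _ _ hx hy => rw [add_mul]; exact S.add_mem hx hy
    | smul r x _ hx => rw [smul_mul_assoc]; exact S.smul_mem r hx
  have key : ∀ a : RingQuot (WeylRel k), ∀ v ∈ S, v * a ∈ S := by
    intro a
    have ha : a ∈ Algebra.adjoin k {Wx k, Wd k} := by
      rw [adjoin_gens]; trivial
    induction ha using Algebra.adjoin_induction with
    | mem x hx =>
      rcases hx with rfl | rfl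
      · exact fun v hv => hX v hv
      · exact fun v hv => hD v hv
    | algebraMap r =>
      intro v hv
      rw [← Algebra.commutes r v, ← Algebra.smul_def]
      exact S.smul_mem r hv
    | add x y _ _ hx hy =>
      intro v hv
      rw [mul_add]
      exact S.add_mem (hx v hv) (hy v hv)
    | mul x y _ _ hx hy =>
      intro v hv
      rw [← mul_assoc]
      exact hy _ (hx v hv)
  rw [eq_top_iff]
  intro a _
  have := key a 1 (by rw [← bb_zero k]; exact hmem _)
  rwa [one_mul] at this

noncomputable def B : Module.Basis (ℕ × ℕ) k (RingQuot (WeylRel k)) :=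
  Module.Basis.mk (linearIndependent_bb k) (by rw [span_bb_eq_top])

end WeylAux

namespace WeylAux
variable (k : Type) [Field k]

theorem commD_bb_zero (j : ℕ) : Wd k * bb k (0, j) - bb k (0, j) * Wd k = 0 := by
  simp only [bb, pow_zero, one_mul, mul_assoc]
  rw [← pow_succ, ← pow_succ']
  simp

theorem commD_bb_succ (a j : ℕ) :
    Wd k * bb k (a + 1, j) - bb k (a + 1, j) * Wd k = (a + 1) • bb k (a, j) := by
  simp only [bb]
  rw [← mul_assoc, comm_d_xpow, add_mul, smul_mul_assoc, mul_assoc, mul_assoc,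
    ← pow_succ', ← pow_succ]
  abel

theorem commX_bb_zero (i : ℕ) : bb k (i, 0) * Wx k - Wx k * bb k (i, 0) = 0 := by
  simp only [bb, pow_zero, mul_one]
  rw [← pow_succ, ← pow_succ']
  simp

theorem commX_bb_succ (i m : ℕ) :
    bb k (i, m + 1) * Wx k - Wx k * bb k (i, m + 1) = (m + 1) • bb k (i, m) := by
  rw [bb_mul_Wx_succ]
  simp only [bb]
  rw [← mul_assoc, ← pow_succ']
  abel

theorem ev_nsmul_bb (n : ℕ) (ij : ℕ × ℕ) :
    ev k (n • bb k ij) = Finsupp.single ij (n : k) := by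
  obtain ⟨i, j⟩ := ij
  rw [map_nsmul, ev_bb, Finsupp.smul_single, nsmul_eq_mul, mul_one]

theorem repr_d (z : RingQuot (WeylRel k)) (hz : Wd k * z = z * Wd k) (a b' : ℕ) :
    ((a + 1 : ℕ) : k) * (B k).repr z (a + 1, b') = 0 := by
  classical
  set L : RingQuot (WeylRel k) →ₗ[k] RingQuot (WeylRel k) :=
    LinearMap.mulLeft k (Wd k) - LinearMap.mulRight k (Wd k) with hL
  set F : RingQuot (WeylRel k) →ₗ[k] k :=
    (Finsupp.lapply (a, b')).comp ((ev k).comp L) with hF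
  have hFb : ∀ ij : ℕ × ℕ, F (bb k ij) = if ij = (a + 1, b') then ((a + 1 : ℕ) : k) else 0 := by
    rintro ⟨i, j⟩
    cases i with
    | zero =>
      have : L (bb k (0, j)) = 0 := commD_bb_zero k j
      simp only [hF, LinearMap.comp_apply, this, map_zero, Finsupp.lapply_apply,
        Finsupp.coe_zero, Pi.zero_apply]
      rw [if_neg]
      simp [Prod.ext_iff]
    | succ m =>
      have : L (bb k (m + 1, j)) = (m + 1) • bb k (m, j) := commD_bb_succ k m j
      simp only [hF, LinearMap.comp_apply, this, ev_nsmul_bb, Finsupp.lapply_apply]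
      rw [Finsupp.single_apply]
      by_cases h : (m, j) = (a, b')
      · rw [if_pos h, if_pos (by simp_all [Prod.ext_iff])]
        rw [Prod.mk.injEq] at h
        obtain ⟨rfl, rfl⟩ := h
        rfl
      · rw [if_neg h, if_neg (by simp_all [Prod.ext_iff])]
  have hFz : F z = 0 := by
    simp only [hF, hL, LinearMap.comp_apply, LinearMap.sub_apply, LinearMap.mulLeft_apply,
      LinearMap.mulRight_apply, hz, sub_self, map_zero, Finsupp.lapply_apply,
      Finsupp.coe_zero, Pi.zero_apply]
  have hrepr : Finsupp.linearCombination k (bb k) ((B k).repr z) = z := by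
    have := (B k).linearCombination_repr z
    rwa [B, Module.Basis.coe_mk] at this
  rw [← hrepr, Finsupp.linearCombination_apply, map_finsuppSum] at hFz
  simp only [map_smul, hFb, smul_ite, smul_zero, smul_eq_mul, mul_ite, mul_zero] at hFz
  rw [Finsupp.sum, Finset.sum_ite_eq'] at hFz
  by_cases hmem : (a + 1, b') ∈ ((B k).repr z).support
  · rw [if_pos hmem] at hFz
    rw [mul_comm]
    exact hFz
  · rw [Finsupp.notMem_support_iff.mp hmem, mul_zero]

theorem repr_x (z : RingQuot (WeylRel k)) (hz : Wx k * z = z * Wx k) (a b' : ℕ) :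
    ((b' + 1 : ℕ) : k) * (B k).repr z (a, b' + 1) = 0 := by
  classical
  set L : RingQuot (WeylRel k) →ₗ[k] RingQuot (WeylRel k) :=
    LinearMap.mulRight k (Wx k) - LinearMap.mulLeft k (Wx k) with hL
  set F : RingQuot (WeylRel k) →ₗ[k] k :=
    (Finsupp.lapply (a, b')).comp ((ev k).comp L) with hF
  have hFb : ∀ ij : ℕ × ℕ, F (bb k ij) = if ij = (a, b' + 1) then ((b' + 1 : ℕ) : k) else 0 := by
    rintro ⟨i, j⟩
    cases j with
    | zero =>
      have : L (bb k (i, 0)) = 0 := commX_bb_zero k i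
      simp only [hF, LinearMap.comp_apply, this, map_zero, Finsupp.lapply_apply,
        Finsupp.coe_zero, Pi.zero_apply]
      rw [if_neg]
      simp [Prod.ext_iff]
    | succ m =>
      have : L (bb k (i, m + 1)) = (m + 1) • bb k (i, m) := commX_bb_succ k i m
      simp only [hF, LinearMap.comp_apply, this, ev_nsmul_bb, Finsupp.lapply_apply]
      rw [Finsupp.single_apply]
      by_cases h : (i, m) = (a, b')
      · rw [if_pos h, if_pos (by simp_all [Prod.ext_iff])]
        rw [Prod.mk.injEq] at h
        obtain ⟨rfl, rfl⟩ := h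
        rfl
      · rw [if_neg h, if_neg (by simp_all [Prod.ext_iff])]
  have hFz : F z = 0 := by
    simp only [hF, hL, LinearMap.comp_apply, LinearMap.sub_apply, LinearMap.mulLeft_apply,
      LinearMap.mulRight_apply, hz, sub_self, map_zero, Finsupp.lapply_apply,
      Finsupp.coe_zero, Pi.zero_apply]
  have hrepr : Finsupp.linearCombination k (bb k) ((B k).repr z) = z := by
    have := (B k).linearCombination_repr z
    rwa [B, Module.Basis.coe_mk] at this
  rw [← hrepr, Finsupp.linearCombination_apply, map_finsuppSum] at hFz
  simp only [map_smul, hFb, smul_ite, smul_zero, smul_eq_mul, mul_ite, mul_zero] at hFz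
  rw [Finsupp.sum, Finset.sum_ite_eq'] at hFz
  by_cases hmem : (a, b' + 1) ∈ ((B k).repr z).support
  · rw [if_pos hmem] at hFz
    rw [mul_comm]
    exact hFz
  · rw [Finsupp.notMem_support_iff.mp hmem, mul_zero]

end WeylAux

namespace WeylAux
variable (k : Type) [Field k] (p : ℕ) [CharP k p]

theorem nsmul_p_eq_zero (y : RingQuot (WeylRel k)) : p • y = 0 := by
  rw [← Nat.cast_smul_eq_nsmul k p y, CharP.cast_eq_zero k p, zero_smul]

theorem central_xp (hp : 0 < p) : Wx k ^ p ∈ Subalgebra.center k (RingQuot (WeylRel k)) := by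
  rw [Subalgebra.mem_center_iff]
  intro a
  have ha : a ∈ Algebra.adjoin k {Wx k, Wd k} := by rw [adjoin_gens]; trivial
  induction ha using Algebra.adjoin_induction with
  | mem x hx =>
    rcases hx with rfl | rfl
    · exact ((Commute.refl (Wx k)).pow_right p).eq
    · have h1 : p - 1 + 1 = p := Nat.succ_pred_eq_of_pos hp
      have := comm_d_xpow k (p - 1)
      rw [h1, nsmul_p_eq_zero k p, add_zero] at this
      exact this
  | algebraMap r => exact (Algebra.commutes r _)
  | add x y _ _ hx hy => rw [add_mul, mul_add, hx, hy]
  | mul x y _ _ hx hy => rw [mul_assoc, hy, ← mul_assoc, hx, mul_assoc]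

theorem central_dp (hp : 0 < p) : Wd k ^ p ∈ Subalgebra.center k (RingQuot (WeylRel k)) := by
  rw [Subalgebra.mem_center_iff]
  intro a
  have ha : a ∈ Algebra.adjoin k {Wx k, Wd k} := by rw [adjoin_gens]; trivial
  induction ha using Algebra.adjoin_induction with
  | mem x hx =>
    rcases hx with rfl | rfl
    · have h1 : p - 1 + 1 = p := Nat.succ_pred_eq_of_pos hp
      have := comm_dpow_x k (p - 1)
      rw [h1, nsmul_p_eq_zero k p, add_zero] at this
      exact this.symm
    · exact ((Commute.refl (Wd k)).pow_right p).eq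
  | algebraMap r => exact (Algebra.commutes r _)
  | add x y _ _ hx hy => rw [add_mul, mul_add, hx, hy]
  | mul x y _ _ hx hy => rw [mul_assoc, hy, ← mul_assoc, hx, mul_assoc]

end WeylAux


set_option maxHeartbeats 1000000 in
open WeylAux in
theorem statement5 (k : Type) [Field k] (p : ℕ) (hp : p.Prime) [CharP k p] :
    Subalgebra.center k (RingQuot (WeylRel k))
      = Algebra.adjoin k {Wx k ^ p, Wd k ^ p} := by
  classical
  apply le_antisymm
  · intro z hz
    have hcomm := Subalgebra.mem_center_iff.mp hz
    have hd : Wd k * z = z * Wd k := hcomm (Wd k)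
    have hx : Wx k * z = z * Wx k := hcomm (Wx k)
    have hdvd : ∀ ij ∈ ((B k).repr z).support, p ∣ ij.1 ∧ p ∣ ij.2 := by
      rintro ⟨i, j⟩ hij
      rw [Finsupp.mem_support_iff] at hij
      constructor
      · cases i with
        | zero => exact dvd_zero p
        | succ m =>
          have h0 := repr_d k z hd m j
          rcases mul_eq_zero.mp h0 with h | h
          · exact (CharP.cast_eq_zero_iff k p _).mp h
          · exact absurd h hij
      · cases j with
        | zero => exact dvd_zero p
        | succ m =>
          have h0 := repr_x k z hx i m
          rcases mul_eq_zero.mp h0 with h | h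
          · exact (CharP.cast_eq_zero_iff k p _).mp h
          · exact absurd h hij
    have hrepr : Finsupp.linearCombination k (bb k) ((B k).repr z) = z := by
      have := (B k).linearCombination_repr z
      rwa [B, Module.Basis.coe_mk] at this
    have hmem : ∀ ij ∈ ((B k).repr z).support,
        ((B k).repr z) ij • bb k ij ∈ Algebra.adjoin k {Wx k ^ p, Wd k ^ p} := by
      rintro ⟨i, j⟩ hij
      apply Subalgebra.smul_mem
      obtain ⟨⟨u, rfl⟩, ⟨v, rfl⟩⟩ := hdvd _ hij
      have h1 : Wx k ^ p ∈ Algebra.adjoin k {Wx k ^ p, Wd k ^ p} :=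
        Algebra.subset_adjoin (Set.mem_insert _ _)
      have h2 : Wd k ^ p ∈ Algebra.adjoin k {Wx k ^ p, Wd k ^ p} :=
        Algebra.subset_adjoin (Set.mem_insert_of_mem _ rfl)
      have : bb k (p * u, p * v) = (Wx k ^ p) ^ u * (Wd k ^ p) ^ v := by
        rw [bb, pow_mul, pow_mul]
      rw [this]
      exact mul_mem (pow_mem h1 u) (pow_mem h2 v)
    rw [← hrepr, Finsupp.linearCombination_apply, Finsupp.sum]
    exact Subalgebra.sum_mem _ hmem
  · apply Algebra.adjoin_le
    rintro y (rfl | rfl)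
    · exact central_xp k p hp.pos
    · exact central_dp k p hp.pos
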